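/- If A and B are DMV-algebras and f : A → B is a homomorphism of the underlying MV-algebra reducts (i.e., f preserves ⊕, * and 0), then f preserves every operation δ_n, i.e., f(δ_n x) = δ_n f(x) for all x ∈ A and n ≥ 1; hence f is a homomorphism of DMV-algebras. -/
import Mathlib

/-- An MV-algebra: an abelian monoid `(A, ⊕, 0)` with an involution `*` satisfying
the Łukasiewicz axioms. -/
class MVAlgebra (A : Type) where
  oplus : A → A → A
  star : A → A
  zero : A
  oplus_assoc : ∀ x y z : A, oplus (oplus x y) z = oplus x (oplus y z)
  oplus_comm : ∀ x y : A, oplus x y = oplus y x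
  oplus_zero : ∀ x : A, oplus x zero = x
  star_star : ∀ x : A, star (star x) = x
  lukasiewicz : ∀ x y : A,
    oplus (star (oplus (star x) y)) y = oplus (star (oplus (star y) x)) x
  oplus_star_zero : ∀ x : A, oplus (star zero) x = star zero

namespace MVAlgebra

variable {A : Type} [MVAlgebra A]

/-- The top element `1 = 0*`. -/
def one : A := star zero

/-- The MV-product `x ⊙ y = (x* ⊕ y*)*`. -/
def odot (x y : A) : A := star (oplus (star x) (star y))

/-- `n`-fold ⊕-sum of an element. -/
def nmul : ℕ → A → A
  | 0, _ => zero
  | n + 1, x => oplus (nmul n x) x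

/-- The lattice join `x ∨ y = (x ⊙ y*) ⊕ y`. -/
def sup (x y : A) : A := oplus (odot x (star y)) y

/-- The lattice meet `x ∧ y = (x ⊕ y*) ⊙ y`. -/
def inf (x y : A) : A := odot (oplus x (star y)) y

/-- The MV-order: `x ≤ y` iff `x ⊙ y* = 0`. -/
def le (x y : A) : Prop := odot x (star y) = zero

end MVAlgebra

/-- The rational unit interval `[0,1] ∩ ℚ`. -/
def QI : Type := {q : ℚ // 0 ≤ q ∧ q ≤ 1}

namespace QI

/-- Truncated addition on `[0,1] ∩ ℚ`. -/
def oplus (r s : QI) : QI :=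
  ⟨min (r.1 + s.1) 1, le_min (add_nonneg r.2.1 s.2.1) zero_le_one, min_le_right _ _⟩

/-- Negation `r* = 1 - r` on `[0,1] ∩ ℚ`. -/
def star (r : QI) : QI :=
  ⟨1 - r.1, by constructor <;> [linarith [r.2.2]; linarith [r.2.1]]⟩

def zero : QI := ⟨0, le_refl 0, zero_le_one⟩

def one : QI := ⟨1, zero_le_one, le_refl 1⟩

/-- Ordinary multiplication of rationals, restricted to `[0,1] ∩ ℚ`. -/
def mul (r s : QI) : QI :=
  ⟨r.1 * s.1, mul_nonneg r.2.1 s.2.1, by nlinarith [r.2.1, r.2.2, s.2.1, s.2.2]⟩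

/-- The MV-product `r ⊙ s = (r* ⊕ s*)*` on `[0,1] ∩ ℚ`. -/
def odot (r s : QI) : QI := star (oplus (star r) (star s))

/-- Division by a natural number in `[0,1] ∩ ℚ`. -/
def div (r : QI) (n : ℕ) : QI :=
  ⟨r.1 / n, div_nonneg r.2.1 (Nat.cast_nonneg n), by
    rcases Nat.eq_zero_or_pos n with h | h
    · simp [h]
    · exact le_trans (div_le_self r.2.1 (by exact_mod_cast h)) r.2.2⟩

/-- `1/n` as an element of `[0,1] ∩ ℚ` (with `1/0 = 0`). -/
def oneOver (n : ℕ) : QI := div one n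

/-- Join (maximum) in `[0,1] ∩ ℚ`. -/
def sup (r s : QI) : QI :=
  ⟨max r.1 s.1, le_max_of_le_left r.2.1, max_le r.2.2 s.2.2⟩

/-- Meet (minimum) in `[0,1] ∩ ℚ`. -/
def inf (r s : QI) : QI :=
  ⟨min r.1 s.1, le_min r.2.1 s.2.1, min_le_of_left_le r.2.2⟩

end QI

/-- A DMV-algebra: an MV-algebra with division operators `δ_n` (`n ≥ 1`) satisfying
`n·δ_n x = x` and `δ_n x ⊙ (n-1)·δ_n x = 0`. -/
class DMVAlgebra (A : Type) extends MVAlgebra A where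
  delta : ℕ → A → A
  delta_nmul : ∀ n : ℕ, 1 ≤ n → ∀ x : A, MVAlgebra.nmul n (delta n x) = x
  delta_odot : ∀ n : ℕ, 1 ≤ n → ∀ x : A,
    MVAlgebra.odot (delta n x) (MVAlgebra.nmul (n - 1) (delta n x)) = MVAlgebra.zero

/-- Homomorphism of MV-algebras: preserves `⊕`, `*` and `0`. -/
def IsMVHom {A B : Type} [MVAlgebra A] [MVAlgebra B] (f : A → B) : Prop :=
  (∀ x y : A, f (MVAlgebra.oplus x y) = MVAlgebra.oplus (f x) (f y)) ∧
  (∀ x : A, f (MVAlgebra.star x) = MVAlgebra.star (f x)) ∧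
  f MVAlgebra.zero = MVAlgebra.zero

/-- Homomorphism of DMV-algebras: an MV-homomorphism preserving every `δ_n`. -/
def IsDMVHom {A B : Type} [DMVAlgebra A] [DMVAlgebra B] (f : A → B) : Prop :=
  IsMVHom f ∧ ∀ n : ℕ, 1 ≤ n → ∀ x : A, f (DMVAlgebra.delta n x) = DMVAlgebra.delta n (f x)

/-- Ideal of an MV-algebra: contains `0`, downward closed, closed under `⊕`. -/
def IsMVIdeal {A : Type} [MVAlgebra A] (I : Set A) : Prop :=
  MVAlgebra.zero ∈ I ∧ (∀ x ∈ I, ∀ y : A, MVAlgebra.le y x → y ∈ I) ∧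
  ∀ x ∈ I, ∀ y ∈ I, MVAlgebra.oplus x y ∈ I

/-- Maximal ideal: a proper ideal maximal under inclusion. -/
def IsMaximalMVIdeal {A : Type} [MVAlgebra A] (I : Set A) : Prop :=
  IsMVIdeal I ∧ I ≠ Set.univ ∧
  ∀ J : Set A, IsMVIdeal J → J ≠ Set.univ → I ⊆ J → J = I

/-- Semisimplicity: the intersection of all maximal ideals is `{0}`. -/
def IsSemisimple (A : Type) [MVAlgebra A] : Prop :=
  ∀ x : A, (∀ I : Set A, IsMaximalMVIdeal I → x ∈ I) → x = MVAlgebra.zero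

/-- Bimorphism `[0,1]_ℚ × A → C`: preserves `∨`, `∧` and the partial sum `+`
in each argument separately. -/
def IsQBimorphism {A C : Type} [MVAlgebra A] [MVAlgebra C] (β : QI → A → C) : Prop :=
  (∀ (r s : QI) (a : A), β (QI.sup r s) a = MVAlgebra.sup (β r a) (β s a)) ∧
  (∀ (r s : QI) (a : A), β (QI.inf r s) a = MVAlgebra.inf (β r a) (β s a)) ∧
  (∀ (r s : QI) (a : A), QI.odot r s = QI.zero →
    MVAlgebra.odot (β r a) (β s a) = MVAlgebra.zero ∧
      β (QI.oplus r s) a = MVAlgebra.oplus (β r a) (β s a)) ∧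
  (∀ (r : QI) (a b : A), β r (MVAlgebra.sup a b) = MVAlgebra.sup (β r a) (β r b)) ∧
  (∀ (r : QI) (a b : A), β r (MVAlgebra.inf a b) = MVAlgebra.inf (β r a) (β r b)) ∧
  (∀ (r : QI) (a b : A), MVAlgebra.odot a b = MVAlgebra.zero →
    MVAlgebra.odot (β r a) (β r b) = MVAlgebra.zero ∧
      β r (MVAlgebra.oplus a b) = MVAlgebra.oplus (β r a) (β r b))

/-- `T`, together with the bimorphism `β`, is the semisimple tensor product
`[0,1]_ℚ ⊗ A`: `T` is semisimple and `β` is universal among bimorphisms into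
semisimple MV-algebras. -/
def IsQTensor (A T : Type) [MVAlgebra A] [MVAlgebra T] (β : QI → A → T) : Prop :=
  IsSemisimple T ∧ IsQBimorphism β ∧
  ∀ (C : Type) [MVAlgebra C], IsSemisimple C → ∀ γ : QI → A → C, IsQBimorphism γ →
    ∃! h : T → C, IsMVHom h ∧ ∀ (r : QI) (a : A), h (β r a) = γ r a

/-- The DMV-structure of `T` is the canonical one of `[0,1]_ℚ ⊗ A`:
`δ_n (t ⊗ a) = (t/n) ⊗ a`. -/
def DeltaCompat {A T : Type} [MVAlgebra A] [DMVAlgebra T] (β : QI → A → T) : Prop :=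
  ∀ n : ℕ, 1 ≤ n → ∀ (t : QI) (a : A),
    DMVAlgebra.delta n (β t a) = β (QI.div t n) a

namespace MVAlgebra

section Lemmas
variable {A : Type} [MVAlgebra A]

lemma zero_oplus (x : A) : oplus zero x = x := by
  rw [oplus_comm, oplus_zero]

lemma oplus_one (x : A) : oplus x (star zero) = star zero := by
  rw [oplus_comm, oplus_star_zero]

lemma star_inj {x y : A} (h : star x = star y) : x = y := by
  rw [← star_star x, h, star_star]

lemma oplus_star_self (x : A) : oplus (star x) x = star zero := by
  have h := lukasiewicz x (star zero)
  rw [oplus_one, star_star, zero_oplus] at h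
  exact h.symm

lemma star_odot (x y : A) : star (odot x y) = oplus (star x) (star y) := by
  show star (star (oplus (star x) (star y))) = _
  rw [star_star]

lemma odot_comm (x y : A) : odot x y = odot y x := by
  show star (oplus (star x) (star y)) = star (oplus (star y) (star x))
  rw [oplus_comm]

lemma odot_assoc (a b c : A) : odot (odot a b) c = odot a (odot b c) := by
  show star (oplus (star (star (oplus (star a) (star b)))) (star c)) =
       star (oplus (star a) (star (star (oplus (star b) (star c)))))
  rw [star_star, star_star, oplus_assoc]

lemma odot_zero (a : A) : odot a zero = zero := by
  show star (oplus (star a) (star zero)) = zero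
  rw [oplus_one, star_star]

lemma odot_one (a : A) : odot a (star zero) = a := by
  show star (oplus (star a) (star (star zero))) = a
  rw [star_star, oplus_zero, star_star]

lemma odot_star_self (a : A) : odot a (star a) = zero := by
  show star (oplus (star a) (star (star a))) = zero
  rw [star_star, oplus_star_self, star_star]

lemma cancel {p q : A} (h : odot p q = zero) :
    odot (oplus p q) (star q) = p := by
  have hl := lukasiewicz (star p) q
  rw [star_star] at hl
  have h2 : star (oplus (star q) (star p)) = zero := by
    rw [oplus_comm]; exact h
  rw [h2, zero_oplus] at hl
  show star (oplus (star (oplus p q)) (star (star q))) = p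
  rw [star_star, hl, star_star]

lemma sup_of_le {p q : A} (h : odot p (star q) = zero) :
    oplus (odot q (star p)) p = q := by
  have hl := lukasiewicz q p
  have h2 : star (oplus (star p) q) = zero := by
    have he : odot p (star q) = star (oplus (star p) q) := by
      show star (oplus (star p) (star (star q))) = _
      rw [star_star]
    rw [← he]; exact h
  rw [h2, zero_oplus] at hl
  show oplus (star (oplus (star q) (star (star p)))) p = q
  rw [star_star]; exact hl

lemma le_oplus_left (p q : A) : odot p (star (oplus p q)) = zero := by
  show star (oplus (star p) (star (star (oplus p q)))) = zero
  rw [star_star, ← oplus_assoc, oplus_star_self, oplus_star_zero, star_star]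

lemma le_oplus_right (p q : A) : odot p (star (oplus q p)) = zero := by
  rw [oplus_comm q p]; exact le_oplus_left p q

lemma ortho_mono {p q c : A} (h1 : odot p (star q) = zero)
    (h2 : odot q c = zero) : odot p c = zero := by
  have hp : odot (oplus p (star q)) q = p := by
    have hc := cancel h1
    rwa [star_star] at hc
  rw [← hp, odot_assoc (oplus p (star q)) q c, h2, odot_zero]

lemma odot_le_right (a b : A) : odot (odot a b) (star b) = zero := by
  rw [odot_assoc, odot_star_self, odot_zero]

lemma odot_le_left (a b : A) : odot (odot a b) (star a) = zero := by
  rw [odot_comm a b]; exact odot_le_right b a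

lemma le_trans {p q r : A} (h1 : odot p (star q) = zero)
    (h2 : odot q (star r) = zero) : odot p (star r) = zero :=
  ortho_mono h1 h2

lemma le_refl (x : A) : odot x (star x) = zero := odot_star_self x

lemma le_antisymm {p q : A} (h1 : odot p (star q) = zero)
    (h2 : odot q (star p) = zero) : p = q := by
  have e := sup_of_le h1
  rw [h2, zero_oplus] at e
  exact e

lemma star_antitone {p q : A} (h : odot p (star q) = zero) :
    odot (star q) (star (star p)) = zero := by
  rw [star_star, odot_comm]; exact h

lemma mono_odot {p q : A} (w : A) (h : odot p (star q) = zero) :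
    odot (odot p w) (star (odot q w)) = zero := by
  have hp : odot (oplus p (star q)) q = p := by
    have hc := cancel h
    rwa [star_star] at hc
  rw [← hp, odot_assoc (oplus p (star q)) q w]
  exact odot_le_right _ _

lemma star_oplus (x y : A) : star (oplus x y) = odot (star x) (star y) := by
  show _ = star (oplus (star (star x)) (star (star y)))
  rw [star_star, star_star]

lemma mono_oplus_left {p q : A} (w : A) (h : odot p (star q) = zero) :
    odot (oplus p w) (star (oplus q w)) = zero := by
  have h1 := star_antitone h
  have h2 := mono_odot (star w) h1
  rw [← star_oplus q w, ← star_oplus p w] at h2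
  have h3 := star_antitone h2
  rwa [star_star, star_star] at h3

lemma mono_oplus_right {p q : A} (w : A) (h : odot p (star q) = zero) :
    odot (oplus w p) (star (oplus w q)) = zero := by
  rw [oplus_comm w p, oplus_comm w q]; exact mono_oplus_left w h

lemma I1 (u v : A) : odot (odot u (oplus (star u) v)) (star v) = zero := by
  show star (oplus (star (odot u (oplus (star u) v))) (star (star v))) = zero
  rw [star_star, star_odot, oplus_assoc, lukasiewicz u v,
    oplus_comm (star (oplus (star v) u)) u, ← oplus_assoc, oplus_star_self,
    oplus_star_zero, star_star]

end Lemmas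
end MVAlgebra
namespace MVAlgebra

section Lemmas2
variable {A : Type} [MVAlgebra A]

lemma sup_comm (x y : A) : sup x y = sup y x := by
  show oplus (odot x (star y)) y = oplus (odot y (star x)) x
  have e1 : odot x (star y) = star (oplus (star x) y) := by
    show star (oplus (star x) (star (star y))) = _
    rw [star_star]
  have e2 : odot y (star x) = star (oplus (star y) x) := by
    show star (oplus (star y) (star (star x))) = _
    rw [star_star]
  rw [e1, e2]
  exact lukasiewicz x y

lemma le_sup_right (x y : A) : odot y (star (sup x y)) = zero :=
  le_oplus_right y (odot x (star y))

lemma le_sup_left (x y : A) : odot x (star (sup x y)) = zero := by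
  rw [sup_comm]; exact le_sup_right y x

lemma sup_le {x y t : A} (h1 : odot x (star t) = zero)
    (h2 : odot y (star t) = zero) : odot (sup x y) (star t) = zero := by
  have e := sup_of_le h2
  have m := mono_odot (star y) h1
  have m2 := mono_oplus_left y m
  rw [e] at m2
  exact m2

lemma star_inf (x y : A) : star (inf x y) = sup (star x) (star y) := by
  show star (odot (oplus x (star y)) y) = oplus (odot (star x) (star (star y))) (star y)
  rw [star_odot, star_star]
  have e : odot (star x) y = star (oplus x (star y)) := by
    show star (oplus (star (star x)) (star y)) = _
    rw [star_star]
  rw [e]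

lemma inf_le_left (x y : A) : odot (inf x y) (star x) = zero := by
  have e : inf x y = odot y (oplus (star y) x) := by
    show odot (oplus x (star y)) y = _
    rw [odot_comm, oplus_comm x (star y)]
  rw [e]
  exact I1 y x

lemma inf_le_right (x y : A) : odot (inf x y) (star y) = zero :=
  odot_le_right (oplus x (star y)) y

lemma le_inf {c x y : A} (h1 : odot c (star x) = zero)
    (h2 : odot c (star y) = zero) : odot c (star (inf x y)) = zero := by
  rw [star_inf]
  have hs := sup_le (star_antitone h1) (star_antitone h2)
  rw [star_star] at hs
  rw [odot_comm]
  exact hs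

lemma inf_of_le {x y : A} (h : odot x (star y) = zero) : inf x y = x :=
  le_antisymm (inf_le_left x y) (le_inf (le_refl x) h)

lemma inf_self (x : A) : inf x x = x := inf_of_le (le_refl x)

lemma inf_comm (x y : A) : inf x y = inf y x := by
  apply star_inj
  rw [star_inf, star_inf, sup_comm]

lemma inf_assoc (x y z : A) : inf (inf x y) z = inf x (inf y z) := by
  apply le_antisymm
  · apply le_inf
    · exact le_trans (inf_le_left (inf x y) z) (inf_le_left x y)
    · apply le_inf
      · exact le_trans (inf_le_left (inf x y) z) (inf_le_right x y)
      · exact inf_le_right (inf x y) z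
  · apply le_inf
    · apply le_inf
      · exact inf_le_left x (inf y z)
      · exact le_trans (inf_le_right x (inf y z)) (inf_le_left y z)
    · exact le_trans (inf_le_right x (inf y z)) (inf_le_right y z)

lemma oplus_inf (x y z : A) :
    oplus x (inf y z) = inf (oplus x y) (oplus x z) := by
  apply le_antisymm
  · apply le_inf
    · exact mono_oplus_right x (inf_le_left y z)
    · exact mono_oplus_right x (inf_le_right y z)
  · have h1 : odot (odot (inf (oplus x y) (oplus x z)) (star x)) (star y) = zero := by
      have a1 := mono_odot (star x) (inf_le_left (oplus x y) (oplus x z))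
      have a2 : odot (odot (oplus x y) (star x)) (star y) = zero := by
        have i := I1 (star x) y
        rw [star_star] at i
        rw [odot_comm (oplus x y) (star x)]
        exact i
      exact le_trans a1 a2
    have h2 : odot (odot (inf (oplus x y) (oplus x z)) (star x)) (star z) = zero := by
      have a1 := mono_odot (star x) (inf_le_right (oplus x y) (oplus x z))
      have a2 : odot (odot (oplus x z) (star x)) (star z) = zero := by
        have i := I1 (star x) z
        rw [star_star] at i
        rw [odot_comm (oplus x z) (star x)]
        exact i
      exact le_trans a1 a2
    have h3 := le_inf h1 h2
    have h4 : odot (inf (oplus x y) (oplus x z))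
        (star (oplus (odot (inf (oplus x y) (oplus x z)) (star x)) x)) = zero :=
      le_sup_left (inf (oplus x y) (oplus x z)) x
    have h5 := mono_oplus_left x h3
    have h6 := le_trans h4 h5
    rw [oplus_comm (inf y z) x] at h6
    exact h6

end Lemmas2
end MVAlgebra
namespace MVAlgebra

section Lemmas3
variable {A : Type} [MVAlgebra A]

lemma inf_eq_sub (y z : A) :
    inf y z = odot z (star (odot z (star y))) := by
  show star (oplus (star (oplus y (star z))) (star z)) =
       star (oplus (star z) (star (star (star (oplus (star z) (star (star y)))))))
  rw [star_star, star_star]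
  rw [oplus_comm y (star z), oplus_comm (star (oplus (star z) y)) (star z)]

lemma chang_disj (y z : A) :
    inf (odot y (star z)) (odot z (star y)) = zero := by
  have key : oplus z (inf (odot y (star z)) (odot z (star y))) = z := by
    rw [oplus_inf, oplus_comm z (odot y (star z)), oplus_comm z (odot z (star y))]
    have e1 : oplus (odot y (star z)) z = oplus (odot z (star y)) y := sup_comm y z
    rw [e1, ← oplus_inf, inf_eq_sub y z, oplus_comm]
    exact sup_of_le (odot_le_left z (star y))
  have hqz : odot (inf (odot y (star z)) (odot z (star y))) z = zero := by
    have h1 := inf_le_left (odot y (star z)) (odot z (star y))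
    have h2 : odot (odot y (star z)) z = zero := by
      rw [odot_assoc, odot_comm (star z) z, odot_star_self, odot_zero]
    exact ortho_mono h1 h2
  have c := cancel hqz
  rw [oplus_comm, key] at c
  rw [← c, odot_star_self]

lemma nmul_zero' (x : A) : nmul 0 x = zero := rfl

lemma nmul_succ (n : ℕ) (x : A) : nmul (n + 1) x = oplus (nmul n x) x := rfl

lemma nmul_add (k m : ℕ) (x : A) :
    nmul (k + m) x = oplus (nmul k x) (nmul m x) := by
  induction m with
  | zero => rw [Nat.add_zero, nmul_zero', oplus_zero]
  | succ m ih => rw [Nat.add_succ, nmul_succ, nmul_succ, ih, oplus_assoc]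

lemma ortho_tower {y : A} {n : ℕ} (H : odot y (nmul (n - 1) y) = zero)
    {k : ℕ} (hk : k + 1 ≤ n) : odot (nmul k y) y = zero := by
  have hH : odot (nmul (n - 1) y) y = zero := by rw [odot_comm]; exact H
  have hle : k ≤ n - 1 := Nat.le_pred_of_lt hk
  obtain ⟨m, hm⟩ := Nat.le.dest hle
  have hlek : odot (nmul k y) (star (nmul (n - 1) y)) = zero := by
    rw [← hm, nmul_add]
    exact le_oplus_left _ _
  exact ortho_mono hlek hH

lemma dir1a {a b c : A} (h2 : odot (oplus a b) c = zero) : odot b c = zero :=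
  ortho_mono (le_oplus_right b a) h2

lemma dir1b {a b c : A} (h1 : odot a b = zero)
    (h2 : odot (oplus a b) c = zero) : odot b c = zero → odot a (oplus b c) = zero := by
  intro hbc
  have hcb : odot c b = zero := by rw [odot_comm]; exact hbc
  have e1 : odot (oplus c b) (star b) = c := cancel hcb
  calc odot a (oplus b c)
      = odot (odot (oplus a b) (star b)) (oplus b c) := by rw [cancel h1]
    _ = odot (oplus a b) (odot (star b) (oplus b c)) := odot_assoc _ _ _
    _ = odot (oplus a b) c := by
        rw [odot_comm (star b) (oplus b c), oplus_comm b c, e1]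
    _ = zero := h2

lemma dir2 {a b c : A} (h1 : odot a (oplus b c) = zero)
    (h2 : odot b c = zero) : odot (oplus a b) c = zero := by
  have hba : odot b a = zero := by
    have hb : odot b (star (oplus b c)) = zero := le_oplus_left b c
    have h1' : odot (oplus b c) a = zero := by rw [odot_comm]; exact h1
    exact ortho_mono hb h1'
  have hab : odot a b = zero := by rw [odot_comm]; exact hba
  have hcb : odot c b = zero := by rw [odot_comm]; exact h2
  calc odot (oplus a b) c
      = odot (oplus a b) (odot (oplus c b) (star b)) := by rw [cancel hcb]
    _ = odot (odot (oplus a b) (star b)) (oplus c b) := by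
        rw [odot_comm (oplus c b) (star b), ← odot_assoc]
    _ = odot a (oplus c b) := by rw [cancel hab]
    _ = zero := by rw [oplus_comm c b]; exact h1

lemma oplus_swap (a b c d : A) :
    oplus (oplus a b) (oplus c d) = oplus (oplus a c) (oplus b d) := by
  rw [oplus_assoc, oplus_assoc, ← oplus_assoc b c d, oplus_comm b c,
    oplus_assoc c b d]

end Lemmas3
end MVAlgebra
namespace MVAlgebra

section Lemmas4
variable {A : Type} [MVAlgebra A]

lemma disj_nmul {a b : A} (h : inf a b = zero) :
    ∀ k : ℕ, inf (nmul k a) b = zero := by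
  intro k
  induction k with
  | zero =>
    show odot (oplus zero (star b)) b = zero
    rw [zero_oplus, odot_comm]
    exact odot_star_self b
  | succ k ih =>
    have e2 : inf (oplus a b) b = b := by
      rw [inf_comm]
      exact inf_of_le (le_oplus_right b a)
    show inf (oplus (nmul k a) a) b = zero
    rw [oplus_comm (nmul k a) a, ← e2, ← inf_assoc, ← oplus_inf, ih,
      oplus_zero]
    exact h

lemma nmul_split {v t y : A} {n : ℕ}
    (hvt : odot v t = zero) (hsum : oplus v t = y)
    (H : ∀ k : ℕ, k + 1 ≤ n → odot (nmul k y) y = zero) :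
    ∀ k : ℕ, k ≤ n → nmul k y = oplus (nmul k v) (nmul k t) ∧
      odot (nmul k v) (nmul k t) = zero := by
  intro k
  induction k with
  | zero =>
    intro _
    constructor
    · rw [nmul_zero', nmul_zero', nmul_zero', oplus_zero]
    · rw [nmul_zero']
      exact odot_zero _
  | succ k ih =>
    intro hk1
    obtain ⟨e, o⟩ := ih (Nat.le_of_succ_le hk1)
    have hky : odot (oplus (nmul k v) (nmul k t)) (oplus v t) = zero := by
      rw [← e, hsum]
      exact H k hk1
    have h1 : odot (nmul k t) (oplus v t) = zero := dir1a hky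
    have h2 : odot (nmul k v) (oplus (nmul k t) (oplus v t)) = zero :=
      dir1b o hky h1
    have h1' : odot (oplus v t) (nmul k t) = zero := by
      rw [odot_comm]; exact h1
    have h3 : odot t (nmul k t) = zero := dir1a h1'
    have h4 : odot v (oplus t (nmul k t)) = zero := dir1b hvt h1' h3
    have h5 : odot v (oplus (nmul k t) t) = zero := by
      rw [oplus_comm (nmul k t) t]; exact h4
    have h6 : odot (nmul k v) (oplus v (oplus (nmul k t) t)) = zero := by
      have er : oplus (nmul k t) (oplus v t) = oplus v (oplus (nmul k t) t) := by
        rw [← oplus_assoc, oplus_comm (nmul k t) v, oplus_assoc]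
      rw [← er]; exact h2
    have h7 := dir2 h6 h5
    constructor
    · rw [nmul_succ, nmul_succ, nmul_succ, e, ← hsum]
      exact oplus_swap _ _ _ _
    · exact h7

lemma common (y z : A) :
    odot y (star (odot y (star z))) = odot z (star (odot z (star y))) := by
  show star (oplus (star y) (star (star (star (oplus (star y) (star (star z))))))) =
       star (oplus (star z) (star (star (star (oplus (star z) (star (star y)))))))
  rw [star_star, star_star, star_star, star_star]
  apply congrArg
  rw [oplus_comm (star y) (star (oplus (star y) z)),
    oplus_comm (star z) (star (oplus (star z) y))]
  have hl := lukasiewicz (star z) (star y)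
  rw [star_star, star_star] at hl
  rw [oplus_comm z (star y), oplus_comm y (star z)] at hl
  exact hl

lemma delta_unique {n : ℕ} (hn : 1 ≤ n) {y z : A}
    (hsum : nmul n y = nmul n z)
    (hy : odot y (nmul (n - 1) y) = zero)
    (hz : odot z (nmul (n - 1) z) = zero) : y = z := by
  obtain ⟨a, ha⟩ : ∃ a, a = odot y (star z) := ⟨_, rfl⟩
  obtain ⟨b, hb⟩ : ∃ b, b = odot z (star y) := ⟨_, rfl⟩
  obtain ⟨v, hv⟩ : ∃ v, v = odot y (star a) := ⟨_, rfl⟩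
  have hay : odot a (star y) = zero := by rw [ha]; exact odot_le_left y (star z)
  have hbz : odot b (star z) = zero := by rw [hb]; exact odot_le_left z (star y)
  have hv' : v = odot z (star b) := by rw [hv, ha, hb]; exact common y z
  have hsum_y : oplus v a = y := by rw [hv]; exact sup_of_le hay
  have hsum_z : oplus v b = z := by rw [hv']; exact sup_of_le hbz
  have hva : odot v a = zero := by
    rw [hv, odot_assoc, odot_comm (star a) a, odot_star_self, odot_zero]
  have hvb : odot v b = zero := by
    rw [hv', odot_assoc, odot_comm (star b) b, odot_star_self, odot_zero]
  have Hy : ∀ k : ℕ, k + 1 ≤ n → odot (nmul k y) y = zero :=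
    fun k hk => ortho_tower hy hk
  have Hz : ∀ k : ℕ, k + 1 ≤ n → odot (nmul k z) z = zero :=
    fun k hk => ortho_tower hz hk
  obtain ⟨ey, oy⟩ := nmul_split hva hsum_y Hy n (Nat.le_refl n)
  obtain ⟨ez, oz⟩ := nmul_split hvb hsum_z Hz n (Nat.le_refl n)
  -- nmul n a = nmul n b
  have hna : odot (nmul n a) (nmul n v) = zero := by rw [odot_comm]; exact oy
  have hnb : odot (nmul n b) (nmul n v) = zero := by rw [odot_comm]; exact oz
  have ca := cancel hna
  rw [oplus_comm (nmul n a) (nmul n v), ← ey] at ca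
  have cb := cancel hnb
  rw [oplus_comm (nmul n b) (nmul n v), ← ez] at cb
  have hab : nmul n a = nmul n b := by rw [← ca, ← cb, hsum]
  -- disjointness
  have hdisj : inf a b = zero := by rw [ha, hb]; exact chang_disj y z
  have d1 := disj_nmul hdisj n
  have d2 : inf b (nmul n a) = zero := by rw [inf_comm]; exact d1
  have d3 := disj_nmul d2 n
  rw [← hab] at d3
  have hna0 : nmul n a = zero := by rw [← inf_self (nmul n a)]; exact d3
  have hnb0 : nmul n b = zero := hab.symm.trans hna0
  have hnn : n = (n - 1) + 1 := (Nat.succ_pred_eq_of_pos hn).symm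
  have ha0 : a = zero := by
    have haa : odot a (star (nmul n a)) = zero := by
      have en : nmul n a = oplus (nmul (n - 1) a) a := by
        conv_lhs => rw [hnn]
        exact nmul_succ _ _
      rw [en]
      exact le_oplus_right a (nmul (n - 1) a)
    rw [hna0] at haa
    exact (odot_one a).symm.trans haa
  have hb0 : b = zero := by
    have hbb : odot b (star (nmul n b)) = zero := by
      have en : nmul n b = oplus (nmul (n - 1) b) b := by
        conv_lhs => rw [hnn]
        exact nmul_succ _ _
      rw [en]
      exact le_oplus_right b (nmul (n - 1) b)
    rw [hnb0] at hbb
    exact (odot_one b).symm.trans hbb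
  exact le_antisymm (ha ▸ ha0) (hb ▸ hb0)

end Lemmas4
end MVAlgebra
/-- If `A` and `B` are DMV-algebras and `f : A → B` is a homomorphism
of the underlying MV-algebra reducts, then `f` preserves every `δ_n` (`n ≥ 1`);
hence `f` is a homomorphism of DMV-algebras. -/
theorem mvHom_is_dmvHom {A B : Type} [DMVAlgebra A] [DMVAlgebra B]
    (f : A → B) (hf : IsMVHom f) :
    (∀ n : ℕ, 1 ≤ n → ∀ x : A,
      f (DMVAlgebra.delta n x) = DMVAlgebra.delta n (f x)) ∧ IsDMVHom f := by
  have hplus := hf.1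
  have hstar := hf.2.1
  have hzero := hf.2.2
  have fodot : ∀ u v : A, f (MVAlgebra.odot u v) = MVAlgebra.odot (f u) (f v) := by
    intro u v
    show f (MVAlgebra.star (MVAlgebra.oplus (MVAlgebra.star u) (MVAlgebra.star v))) = _
    rw [hstar, hplus, hstar, hstar]
    rfl
  have fnmul : ∀ (k : ℕ) (u : A), f (MVAlgebra.nmul k u) = MVAlgebra.nmul k (f u) := by
    intro k u
    induction k with
    | zero => exact hzero
    | succ k ih =>
      show f (MVAlgebra.oplus (MVAlgebra.nmul k u) u) =
        MVAlgebra.oplus (MVAlgebra.nmul k (f u)) (f u)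
      rw [hplus, ih]
  have main : ∀ n : ℕ, 1 ≤ n → ∀ x : A,
      f (DMVAlgebra.delta n x) = DMVAlgebra.delta n (f x) := by
    intro n hn x
    apply MVAlgebra.delta_unique hn
    · rw [← fnmul n (DMVAlgebra.delta n x), DMVAlgebra.delta_nmul n hn x,
        DMVAlgebra.delta_nmul n hn (f x)]
    · rw [← fnmul (n - 1) (DMVAlgebra.delta n x), ← fodot,
        DMVAlgebra.delta_odot n hn x, hzero]
    · exact DMVAlgebra.delta_odot n hn (f x)
  exact ⟨main, hf, main⟩
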